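/- arXiv:2012.09725 — 5 statements merged into one kernel-verified Lean document; each statement's English description precedes it below -/
import Mathlib

section
/- Let n ≥ 2, m > 0, and define f : 2^E → ℝ by f(S) = |S| if |S| ≤ ⌊n/2⌋ and f(S) = m·2^{|S|+1} + |S| otherwise. Then f is supermodular: f(S) + f(T) ≤ f(S ∪ T) + f(S ∩ T) for all S, T ⊆ E. -/
lemma aux_pow (a s t u : ℕ) (h1 : a ≤ t) (h2 : t ≤ u) (h : a + u = s + t) :
    2 ^ s + 2 ^ t ≤ 2 ^ u + 2 ^ a := by
  obtain ⟨d, rfl⟩ : ∃ d, u = t + d := ⟨u - t, by omega⟩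
  obtain rfl : s = a + d := by omega
  rw [pow_add, pow_add]
  have h2a : 2 ^ a ≤ 2 ^ t := Nat.pow_le_pow_right (by norm_num) h1
  have hd : 1 ≤ 2 ^ d := Nat.one_le_two_pow
  nlinarith

theorem stmt_6 {α : Type*} [DecidableEq α] (E : Finset α) (n : ℕ) (hn : 2 ≤ n)
    (hE : E.card = n) (m : ℝ) (hm : 0 < m)
    (f : Finset α → ℝ)
    (hf : ∀ S : Finset α, f S =
      if S.card ≤ n / 2 then (S.card : ℝ) else m * 2 ^ (S.card + 1) + (S.card : ℝ)) :
    ∀ S T : Finset α, S ⊆ E → T ⊆ E →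
      f S + f T ≤ f (S ∪ T) + f (S ∩ T) := by
  intro S T hS hT
  rw [hf S, hf T, hf (S ∪ T), hf (S ∩ T)]
  have hsum : (S ∪ T).card + (S ∩ T).card = S.card + T.card :=
    Finset.card_union_add_card_inter S T
  have h1 : S.card ≤ (S ∪ T).card := Finset.card_le_card Finset.subset_union_left
  have h2 : T.card ≤ (S ∪ T).card := Finset.card_le_card Finset.subset_union_right
  have h3 : (S ∩ T).card ≤ S.card := Finset.card_le_card Finset.inter_subset_left
  have h4 : (S ∩ T).card ≤ T.card := Finset.card_le_card Finset.inter_subset_right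
  set s := S.card with hs'
  set t := T.card with ht'
  set u := (S ∪ T).card with hu'
  set a := (S ∩ T).card with ha'
  have hcast : (u : ℝ) + (a : ℝ) = (s : ℝ) + (t : ℝ) := by exact_mod_cast hsum
  split_ifs with hA hB hC hD hE1 hF hG hH hI hJ hK hL hM hN <;>
    try { exfalso; omega }
  -- case s≤, t≤, u≤, a≤
  · linarith
  -- case s≤, t≤, u>, a≤
  · have : (0:ℝ) < m * 2 ^ (u + 1) := by positivity
    linarith
  -- case s≤, t>, u>, a≤
  · have hp : (2:ℝ) ^ (t + 1) ≤ 2 ^ (u + 1) :=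
      pow_le_pow_right₀ (by norm_num) (by omega)
    nlinarith
  -- case s>, t≤, u>, a≤
  · have hp : (2:ℝ) ^ (s + 1) ≤ 2 ^ (u + 1) :=
      pow_le_pow_right₀ (by norm_num) (by omega)
    nlinarith
  -- case s>, t>, u>, a≤
  · have hsu : s + 1 ≤ u := by omega
    have htu : t + 1 ≤ u := by omega
    have e1 : (2:ℝ) ^ (s + 1) ≤ 2 ^ u := pow_le_pow_right₀ (by norm_num) hsu
    have e2 : (2:ℝ) ^ (t + 1) ≤ 2 ^ u := pow_le_pow_right₀ (by norm_num) htu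
    have e3 : (2:ℝ) ^ (u + 1) = 2 * 2 ^ u := by ring
    nlinarith
  -- case s>, t>, u>, a>
  · have key : 2 ^ (s + 1) + 2 ^ (t + 1) ≤ 2 ^ (u + 1) + 2 ^ (a + 1) :=
      aux_pow (a + 1) (s + 1) (t + 1) (u + 1) (by omega) (by omega) (by omega)
    have keyR : (2:ℝ) ^ (s + 1) + 2 ^ (t + 1) ≤ 2 ^ (u + 1) + 2 ^ (a + 1) := by
      exact_mod_cast key
    nlinarith
end

section
/- Let n ≥ 2 and 0 < ε ≤ n/(n+2), and define g : 2^E → ℝ by g(S) = (2|S|/n)·ε if |S| ≤ ⌊n/2⌋ and g(S) = 2(|S| − ⌊n/2⌋) otherwise. Then g is supermodular. -/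
lemma stmt_8_aux (h : ℕ → ℝ)
    (hΔ : ∀ i j : ℕ, i ≤ j → h (i+1) - h i ≤ h (j+1) - h j) :
    ∀ k a b c d : ℕ, a = c + k → a ≤ b → a + b = c + d →
      h a + h b ≤ h c + h d := by
  intro k
  induction k with
  | zero =>
    intro a b c d ha hab hsum
    have h1 : a = c := by omega
    have h2 : b = d := by omega
    subst h1; subst h2; exact le_rfl
  | succ k ih =>
    intro a b c d ha hab hsum
    have h1 : h (c + k + 1) - h (c + k) ≤ h (b + 1) - h b := hΔ (c + k) b (by omega)
    have h2 : h (c + k) + h (b + 1) ≤ h c + h d := ih (c + k) (b + 1) c d rfl (by omega) (by omega)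
    have ha' : a = c + k + 1 := by omega
    rw [ha']
    linarith

theorem stmt_8 {α : Type*} [DecidableEq α] (E : Finset α) (n : ℕ) (hn : 2 ≤ n)
    (hE : E.card = n) (ε : ℝ) (hε : 0 < ε) (hε' : ε ≤ (n : ℝ) / ((n : ℝ) + 2))
    (g : Finset α → ℝ)
    (hg : ∀ S : Finset α, g S =
      if S.card ≤ n / 2 then 2 * (S.card : ℝ) / (n : ℝ) * ε
      else 2 * ((S.card : ℝ) - ((n / 2 : ℕ) : ℝ))) :
    ∀ S T : Finset α, S ⊆ E → T ⊆ E →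
      g S + g T ≤ g (S ∪ T) + g (S ∩ T) := by
  classical
  set m := n / 2 with hm
  set f : ℕ → ℝ := fun k => if k ≤ m then 2 * (k : ℝ) / (n : ℝ) * ε
      else 2 * ((k : ℝ) - (m : ℝ)) with hf
  have hgf : ∀ S : Finset α, g S = f S.card := fun S => hg S
  have hnR : (2:ℝ) ≤ (n:ℝ) := by exact_mod_cast hn
  have hn0 : (0:ℝ) < (n:ℝ) := by linarith
  have hmn : 2 * m ≤ n := by omega
  have hmR : 2 * (m:ℝ) ≤ (n:ℝ) := by exact_mod_cast hmn
  have hm0 : (0:ℝ) ≤ (m:ℝ) := Nat.cast_nonneg m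
  have hεn : ε * ((n:ℝ) + 2) ≤ (n:ℝ) := by
    have h2 : (0:ℝ) < (n:ℝ) + 2 := by linarith
    calc ε * ((n:ℝ) + 2) ≤ ((n:ℝ) / ((n:ℝ) + 2)) * ((n:ℝ) + 2) := by
          exact mul_le_mul_of_nonneg_right hε' h2.le
      _ = (n:ℝ) := by field_simp
  -- values of the increments
  have A : ∀ i : ℕ, i + 1 ≤ m → f (i+1) - f i = 2 / (n:ℝ) * ε := by
    intro i hi
    have hi' : i ≤ m := by omega
    simp only [hf, if_pos hi, if_pos hi']
    push_cast
    ring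
  have B : f (m+1) - f m = 2 - 2 * (m:ℝ) / (n:ℝ) * ε := by
    simp only [hf, if_neg (by omega : ¬ m + 1 ≤ m), if_pos (le_refl m)]
    push_cast
    ring
  have C : ∀ i : ℕ, m < i → f (i+1) - f i = 2 := by
    intro i hi
    simp only [hf, if_neg (by omega : ¬ i + 1 ≤ m), if_neg (by omega : ¬ i ≤ m)]
    push_cast
    ring
  -- comparisons
  have AB : 2 / (n:ℝ) * ε ≤ 2 - 2 * (m:ℝ) / (n:ℝ) * ε := by
    have hnum : 2 * ε + 2 * (m:ℝ) * ε - 2 * (n:ℝ) ≤ 0 := by nlinarith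
    have key : 2 / (n:ℝ) * ε - (2 - 2 * (m:ℝ) / (n:ℝ) * ε)
        = (2 * ε + 2 * (m:ℝ) * ε - 2 * (n:ℝ)) / (n:ℝ) := by
      field_simp
      ring
    have h2 : (2 * ε + 2 * (m:ℝ) * ε - 2 * (n:ℝ)) / (n:ℝ) ≤ 0 :=
      div_nonpos_of_nonpos_of_nonneg hnum hn0.le
    linarith
  have AC : 2 / (n:ℝ) * ε ≤ 2 := by
    have hnum : 2 * ε - 2 * (n:ℝ) ≤ 0 := by nlinarith
    have key : 2 / (n:ℝ) * ε - 2 = (2 * ε - 2 * (n:ℝ)) / (n:ℝ) := by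
      field_simp
    have h2 : (2 * ε - 2 * (n:ℝ)) / (n:ℝ) ≤ 0 :=
      div_nonpos_of_nonpos_of_nonneg hnum hn0.le
    linarith
  have BC : 2 - 2 * (m:ℝ) / (n:ℝ) * ε ≤ 2 := by
    have : 0 ≤ 2 * (m:ℝ) / (n:ℝ) * ε := by positivity
    linarith
  have hΔ : ∀ i j : ℕ, i ≤ j → f (i+1) - f i ≤ f (j+1) - f j := by
    intro i j hij
    rcases le_or_gt (i+1) m with hi | hi
    · rcases le_or_gt (j+1) m with hj | hj
      · rw [A i hi, A j hj]
      · rcases le_or_gt j m with hj' | hj'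
        · have hjm : j = m := by omega
          subst hjm
          rw [A i hi, B]; exact AB
        · rw [A i hi, C j hj']; exact AC
    · rcases le_or_gt i m with hi' | hi'
      · have him : i = m := by omega
        rcases le_or_gt j i with hj | hj
        · have hji : j = i := le_antisymm hj hij
          rw [hji]
        · rw [him, B, C j (by omega)]; exact BC
      · rw [C i hi', C j (by omega)]
  intro S T _ _
  have key : ∀ S T : Finset α, S.card ≤ T.card → g S + g T ≤ g (S ∪ T) + g (S ∩ T) := by
    intro S T hST
    rw [hgf S, hgf T, hgf (S ∪ T), hgf (S ∩ T)]
    have hc : (S ∩ T).card ≤ S.card := Finset.card_le_card Finset.inter_subset_left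
    have hsum : (S ∪ T).card + (S ∩ T).card = S.card + T.card :=
      Finset.card_union_add_card_inter S T
    have := stmt_8_aux f hΔ (S.card - (S ∩ T).card) S.card T.card (S ∩ T).card (S ∪ T).card
      (by omega) hST (by omega)
    linarith
  rcases le_total S.card T.card with h | h
  · exact key S T h
  · have := key T S h
    rw [Finset.union_comm, Finset.inter_comm] at this
    linarith
end

section
/- With f and g as defined (f(S) = |S| or m·2^{|S|+1}+|S|; g(S) = (2|S|/n)ε or 2(|S|−⌊n/2⌋), threshold ⌊n/2⌋), for every nonempty S ⊆ E the ratio h(S) = f(S)/g(S) satisfies h(S) ≥ min(n/(2ε), m). -/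
theorem stmt_9 {α : Type*} [DecidableEq α] (E : Finset α) (n : ℕ) (hn : 2 ≤ n)
    (hE : E.card = n) (m ε : ℝ) (hm : 0 < m)
    (hε : 0 < ε) (hε' : ε ≤ (n : ℝ) / ((n : ℝ) + 2))
    (f g h : Finset α → ℝ)
    (hf : ∀ S : Finset α, f S =
      if S.card ≤ n / 2 then (S.card : ℝ) else m * 2 ^ (S.card + 1) + (S.card : ℝ))
    (hg : ∀ S : Finset α, g S =
      if S.card ≤ n / 2 then 2 * (S.card : ℝ) / (n : ℝ) * ε
      else 2 * ((S.card : ℝ) - ((n / 2 : ℕ) : ℝ)))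
    (hh : ∀ S : Finset α, h S = f S / g S) :
    ∀ S : Finset α, S ⊆ E → S ≠ ∅ →
      min ((n : ℝ) / (2 * ε)) m ≤ h S := by
  intro S hS hSne
  have hk1 : 1 ≤ S.card := Finset.card_pos.mpr (Finset.nonempty_iff_ne_empty.mpr hSne)
  have hkn : S.card ≤ n := hE ▸ Finset.card_le_card hS
  have hn0 : (0:ℝ) < (n:ℝ) := by positivity
  have hkR : (1:ℝ) ≤ (S.card:ℝ) := by exact_mod_cast hk1
  rw [hh, hf, hg]
  by_cases hcase : S.card ≤ n / 2
  · simp only [if_pos hcase]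
    have heq : (S.card : ℝ) / (2 * (S.card:ℝ) / (n:ℝ) * ε) = (n:ℝ) / (2 * ε) := by
      field_simp
    rw [heq]
    exact min_le_left _ _
  · simp only [if_neg hcase]
    refine le_trans (min_le_right _ _) ?_
    push_neg at hcase
    have hd1 : (1:ℝ) ≤ (S.card:ℝ) - ((n/2 : ℕ) : ℝ) := by
      have : (n/2 : ℕ) + 1 ≤ S.card := hcase
      have := (Nat.cast_le (α := ℝ)).mpr this
      push_cast at this
      linarith
    have hdpos : (0:ℝ) < 2 * ((S.card:ℝ) - ((n/2 : ℕ) : ℝ)) := by linarith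
    rw [le_div_iff₀ hdpos]
    have hk2 : (S.card:ℝ) ≤ 2 ^ S.card := by
      exact_mod_cast (Nat.lt_two_pow_self (n := S.card)).le
    have hd2 : 2 * ((S.card:ℝ) - ((n/2 : ℕ) : ℝ)) ≤ 2 ^ (S.card + 1) := by
      have h0 : (0:ℝ) ≤ ((n/2 : ℕ) : ℝ) := by positivity
      have : 2 * ((S.card:ℝ) - ((n/2 : ℕ) : ℝ)) ≤ 2 * (S.card:ℝ) := by linarith
      calc 2 * ((S.card:ℝ) - ((n/2 : ℕ) : ℝ)) ≤ 2 * (S.card:ℝ) := this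
        _ ≤ 2 * 2 ^ S.card := by linarith
        _ = 2 ^ (S.card + 1) := by ring
    nlinarith [mul_le_mul_of_nonneg_left hd2 hm.le]
end

section
/- Fix R ⊆ E with |R| = ⌊n/2⌋ and define g_R(S) = g(S) for S ≠ R and g_R(R) = 1, where g(S) = (2|S|/n)ε if |S| ≤ ⌊n/2⌋ and g(S) = 2(|S|−⌊n/2⌋) otherwise. If 0 < ε ≤ n/(n+2) and n ≥ 2, then g_R is monotone non-decreasing. -/
theorem stmt_11 {α : Type*} [DecidableEq α] (E : Finset α) (n : ℕ) (hn : 2 ≤ n)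
    (hE : E.card = n) (R : Finset α) (hR : R ⊆ E) (hRcard : R.card = n / 2)
    (ε : ℝ) (hε : 0 < ε) (hε' : ε ≤ (n : ℝ) / ((n : ℝ) + 2))
    (g gR : Finset α → ℝ)
    (hg : ∀ S : Finset α, g S =
      if S.card ≤ n / 2 then 2 * (S.card : ℝ) / (n : ℝ) * ε
      else 2 * ((S.card : ℝ) - ((n / 2 : ℕ) : ℝ)))
    (hgR : ∀ S : Finset α, gR S = if S = R then 1 else g S) :
    ∀ S T : Finset α, S ⊆ T → T ⊆ E → gR S ≤ gR T := by
  have hn0 : (0:ℝ) < (n:ℝ) := by positivity <;> omega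
  have hn0' : (0:ℝ) < (n:ℝ) := by
    have : (2:ℝ) ≤ (n:ℝ) := by exact_mod_cast hn
    linarith
  have hε1 : ε ≤ 1 := by
    refine le_trans hε' ?_
    rw [div_le_one (by linarith)]
    linarith
  have h2m : 2 * (((n/2 : ℕ)):ℝ) ≤ (n:ℝ) := by
    have : n / 2 * 2 ≤ n := Nat.div_mul_le_self n 2
    have := (Nat.cast_le (α := ℝ)).2 this
    push_cast at this
    linarith
  have hsmall : ∀ a : ℕ, a ≤ n / 2 → 2 * (a:ℝ) / n * ε ≤ 1 := by
    intro a ha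
    have ha' : (a:ℝ) ≤ ((n/2:ℕ):ℝ) := by exact_mod_cast ha
    rw [div_mul_eq_mul_div, div_le_one hn0']
    nlinarith
  have hbig : ∀ b : ℕ, ¬ b ≤ n / 2 → 1 ≤ 2 * ((b:ℝ) - ((n/2:ℕ):ℝ)) := by
    intro b hb
    have : ((n/2:ℕ):ℝ) + 1 ≤ (b:ℝ) := by exact_mod_cast Nat.succ_le_of_lt (Nat.lt_of_not_le hb)
    linarith
  have hgmono : ∀ a b : ℕ, a ≤ b →
      (if a ≤ n / 2 then 2 * (a:ℝ) / n * ε else 2 * ((a:ℝ) - ((n/2:ℕ):ℝ))) ≤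
      (if b ≤ n / 2 then 2 * (b:ℝ) / n * ε else 2 * ((b:ℝ) - ((n/2:ℕ):ℝ))) := by
    intro a b hab
    split_ifs with h1 h2 h3
    · have : (a:ℝ) ≤ (b:ℝ) := by exact_mod_cast hab
      gcongr
    · exact le_trans (hsmall a h1) (hbig b h2)
    · omega
    · have : (a:ℝ) ≤ (b:ℝ) := by exact_mod_cast hab
      linarith
  intro S T hST hTE
  rw [hgR S, hgR T]
  split_ifs with h1 h2 h3
  · exact le_rfl
  · -- S = R, T ≠ R : R ⊂ T
    subst h1
    have hss : S ⊂ T := Finset.ssubset_iff_subset_ne.2 ⟨hST, fun h => h2 h.symm⟩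
    have hcard : n / 2 < T.card := by
      have := Finset.card_lt_card hss
      omega
    rw [hg T, if_neg (by omega)]
    exact hbig T.card (by omega)
  · -- S ≠ R, T = R
    subst h3
    have hS : S.card ≤ n / 2 := by
      have := Finset.card_le_card hST
      omega
    rw [hg S, if_pos hS]
    exact hsmall S.card hS
  · rw [hg S, hg T]
    exact hgmono _ _ (Finset.card_le_card hST)
end

section
/- Fix R ⊆ E with |R| = ⌊n/2⌋ and define g_R(S) = g(S) for S ≠ R, g_R(R) = 1, where g(S) = (2|S|/n)ε if |S| ≤ ⌊n/2⌋ and g(S) = 2(|S|−⌊n/2⌋) otherwise, with 0 < ε ≤ n/(n+2). Then g_R is supermodular. -/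
noncomputable def fE (n k : ℕ) (ε : ℝ) (s : ℕ) : ℝ :=
  if s ≤ k then 2 * (s : ℝ) / (n : ℝ) * ε else 2 * ((s : ℝ) - (k : ℝ))

lemma fE_caseR (n k : ℕ) (ε : ℝ) (hk1 : 1 ≤ k) (hk : 2 * k ≤ n) (hε : 0 < ε)
    (hε' : ε ≤ (n : ℝ) / ((n : ℝ) + 2)) (t c d : ℕ)
    (hc : k < c) (hd : d < k) (hdt : d ≤ t) (hsum : c + d = k + t) :
    1 + fE n k ε t ≤ fE n k ε c + fE n k ε d := by
  have hn2 : 2 ≤ n := by omega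
  have hnp : (0:ℝ) < n := by exact_mod_cast Nat.lt_of_lt_of_le (by norm_num) hn2
  have hεn2 : ε * ((n:ℝ) + 2) ≤ n := by
    rw [← le_div_iff₀ (by positivity)]; exact hε'
  have h2ε : 2 * ε ≤ n := by nlinarith [mul_nonneg hε.le hnp.le]
  have hc' : (k:ℝ) + 1 ≤ c := by exact_mod_cast hc
  have hd' : (d:ℝ) + 1 ≤ k := by exact_mod_cast hd
  have hdt' : (d:ℝ) ≤ t := by exact_mod_cast hdt
  have hsum' : (c:ℝ) + d = k + t := by exact_mod_cast hsum
  unfold fE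
  by_cases ht : t ≤ k
  · rw [if_pos ht, if_neg (show ¬ c ≤ k by omega), if_pos hd.le]
    have htd1 : 1 ≤ (t:ℝ) - d := by linarith
    have h : 2*((t:ℝ)-d)/n*ε ≤ (t:ℝ)-d := by
      rw [div_mul_eq_mul_div, div_le_iff₀ hnp]
      nlinarith [mul_le_mul_of_nonneg_left h2ε (show (0:ℝ) ≤ (t:ℝ)-d by linarith)]
    have heq : 2*(t:ℝ)/n*ε - 2*(d:ℝ)/n*ε = 2*((t:ℝ)-d)/n*ε := by ring
    linarith
  · rw [if_neg ht, if_neg (show ¬ c ≤ k by omega), if_pos hd.le]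
    push_neg at ht
    have ht' : (k:ℝ) + 1 ≤ t := by exact_mod_cast ht
    have hd0 : (0:ℝ) ≤ 2*(d:ℝ)/n*ε := by positivity
    linarith

lemma fE_caseU (n k : ℕ) (ε : ℝ) (hk1 : 1 ≤ k) (hk : 2 * k ≤ n) (hε : 0 < ε)
    (hε' : ε ≤ (n : ℝ) / ((n : ℝ) + 2)) (s t d : ℕ)
    (hs : s ≤ k) (ht : t ≤ k) (hd : d ≤ k) (hsum : k + d = s + t) :
    fE n k ε s + fE n k ε t ≤ 1 + fE n k ε d := by
  have hn2 : 2 ≤ n := by omega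
  have hnp : (0:ℝ) < n := by exact_mod_cast Nat.lt_of_lt_of_le (by norm_num) hn2
  have hε1 : ε < 1 := lt_of_le_of_lt hε' (by rw [div_lt_one (by positivity)]; linarith)
  have hkn : 2 * (k:ℝ) ≤ n := by exact_mod_cast hk
  have hsum' : (k:ℝ) + d = s + t := by exact_mod_cast hsum
  unfold fE
  rw [if_pos hs, if_pos ht, if_pos hd]
  have heq : 2*(s:ℝ)/n*ε + 2*(t:ℝ)/n*ε = 2*(k:ℝ)/n*ε + 2*(d:ℝ)/n*ε := by
    linear_combination (2*ε/(n:ℝ)) * hsum'.symm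
  have h : 2*(k:ℝ)/n*ε ≤ 1 := by
    rw [div_mul_eq_mul_div, div_le_one hnp]
    nlinarith [mul_le_mul_of_nonneg_right hkn hε.le]
  linarith

lemma fE_caseI (n k : ℕ) (ε : ℝ) (s t c : ℕ)
    (hs : k < s) (ht : k < t) (hc : k < c) (hsum : c + k = s + t) :
    fE n k ε s + fE n k ε t ≤ fE n k ε c + 1 := by
  have hsum' : (c:ℝ) + k = s + t := by exact_mod_cast hsum
  unfold fE
  rw [if_neg (show ¬ s ≤ k by omega), if_neg (show ¬ t ≤ k by omega),
    if_neg (show ¬ c ≤ k by omega)]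
  linarith

lemma fE_conv (n k : ℕ) (ε : ℝ) (hk1 : 1 ≤ k) (hk : 2 * k ≤ n) (hε : 0 < ε)
    (hε' : ε ≤ (n : ℝ) / ((n : ℝ) + 2)) (a b c d : ℕ)
    (hac : a ≤ c) (hbc : b ≤ c) (hda : d ≤ a) (hdb : d ≤ b) (hsum : c + d = a + b) :
    fE n k ε a + fE n k ε b ≤ fE n k ε c + fE n k ε d := by
  have hn2 : 2 ≤ n := by omega
  have hnp : (0:ℝ) < n := by exact_mod_cast Nat.lt_of_lt_of_le (by norm_num) hn2
  have hn0 : (n:ℝ) ≠ 0 := ne_of_gt hnp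
  have hεn2 : ε * ((n:ℝ) + 2) ≤ n := by
    rw [← le_div_iff₀ (by positivity)]; exact hε'
  have hεn : ε ≤ (n:ℝ) := by nlinarith
  have hkn : 2 * (k:ℝ) ≤ n := by exact_mod_cast hk
  have hsum' : (c:ℝ) + d = a + b := by exact_mod_cast hsum
  unfold fE
  by_cases hck : c ≤ k
  · rw [if_pos (le_trans hac hck), if_pos (le_trans hbc hck), if_pos hck,
      if_pos (le_trans (le_trans hda hac) hck)]
    exact le_of_eq (by linear_combination (2*ε/(n:ℝ)) * hsum'.symm)
  · rw [if_neg hck]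
    push_neg at hck
    have hck' : (k:ℝ) + 1 ≤ c := by exact_mod_cast hck
    by_cases hdk : d ≤ k
    · rw [if_pos hdk]
      have hdk' : (d:ℝ) ≤ k := by exact_mod_cast hdk
      by_cases hak : a ≤ k <;> by_cases hbk : b ≤ k
      · rw [if_pos hak, if_pos hbk]
        have hc0 : (0:ℝ) ≤ c := by positivity
        have h : 2*(c:ℝ)/n*ε ≤ 2*((c:ℝ)-k) := by
          rw [div_mul_eq_mul_div, div_le_iff₀ hnp]
          nlinarith [mul_le_mul_of_nonneg_left hεn2 hc0]
        have heq : 2*(a:ℝ)/n*ε + 2*(b:ℝ)/n*ε = 2*(c:ℝ)/n*ε + 2*(d:ℝ)/n*ε := by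
          linear_combination (2*ε/(n:ℝ)) * hsum'.symm
        have hd0 : (0:ℝ) ≤ 2*(d:ℝ)/n*ε := by positivity
        linarith
      · rw [if_pos hak, if_neg hbk]
        have hda' : (d:ℝ) ≤ a := by exact_mod_cast hda
        have h : 2*((a:ℝ)-d)/n*ε ≤ 2*((a:ℝ)-d) := by
          rw [div_mul_eq_mul_div, div_le_iff₀ hnp]
          nlinarith
        have heq : 2*(a:ℝ)/n*ε - 2*(d:ℝ)/n*ε = 2*((a:ℝ)-d)/n*ε := by ring
        linarith
      · rw [if_neg hak, if_pos hbk]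
        have hdb' : (d:ℝ) ≤ b := by exact_mod_cast hdb
        have h : 2*((b:ℝ)-d)/n*ε ≤ 2*((b:ℝ)-d) := by
          rw [div_mul_eq_mul_div, div_le_iff₀ hnp]
          nlinarith
        have heq : 2*(b:ℝ)/n*ε - 2*(d:ℝ)/n*ε = 2*((b:ℝ)-d)/n*ε := by ring
        linarith
      · rw [if_neg hak, if_neg hbk]
        have hd0 : (0:ℝ) ≤ 2*(d:ℝ)/n*ε := by positivity
        linarith
    · push_neg at hdk
      rw [if_neg (by omega), if_neg (by omega), if_neg (by omega)]
      linarith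

theorem stmt_12 {α : Type*} [DecidableEq α] (E : Finset α) (n : ℕ) (hn : 2 ≤ n)
    (hE : E.card = n) (R : Finset α) (hR : R ⊆ E) (hRcard : R.card = n / 2)
    (ε : ℝ) (hε : 0 < ε) (hε' : ε ≤ (n : ℝ) / ((n : ℝ) + 2))
    (g gR : Finset α → ℝ)
    (hg : ∀ S : Finset α, g S =
      if S.card ≤ n / 2 then 2 * (S.card : ℝ) / (n : ℝ) * ε
      else 2 * ((S.card : ℝ) - ((n / 2 : ℕ) : ℝ)))
    (hgR : ∀ S : Finset α, gR S = if S = R then 1 else g S) :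
    ∀ S T : Finset α, S ⊆ E → T ⊆ E →
      gR S + gR T ≤ gR (S ∪ T) + gR (S ∩ T) := by
  intro S T hS hT
  have hgf : ∀ S : Finset α, g S = fE n (n / 2) ε S.card := fun S => hg S
  have hk1 : 1 ≤ n / 2 := by omega
  have hk2 : 2 * (n / 2) ≤ n := by omega
  have hcard := Finset.card_union_add_card_inter S T
  rw [hgR S, hgR T, hgR (S ∪ T), hgR (S ∩ T)]
  by_cases hSR : S = R
  · subst hSR
    by_cases hTR : T = S
    · subst hTR
      rw [Finset.union_self, Finset.inter_self, if_pos rfl]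
    · rw [if_pos rfl, if_neg hTR]
      by_cases hU : S ∪ T = S
      · have hTsub : T ⊆ S := Finset.union_eq_left.mp hU
        have hI : S ∩ T = T := Finset.inter_eq_right.mpr hTsub
        rw [hU, hI, if_pos rfl, if_neg hTR]
      · by_cases hI : S ∩ T = S
        · have hRsub : S ⊆ T := Finset.inter_eq_left.mp hI
          have hU' : S ∪ T = T := Finset.union_eq_right.mpr hRsub
          rw [hU', hI, if_pos rfl, if_neg hTR]
          linarith
        · rw [if_neg hU, if_neg hI, hgf, hgf, hgf]
          have hc : n / 2 < (S ∪ T).card := by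
            have := Finset.card_lt_card (Finset.ssubset_iff_subset_ne.mpr
              ⟨Finset.subset_union_left, fun h => hU h.symm⟩)
            omega
          have hd : (S ∩ T).card < n / 2 := by
            have := Finset.card_lt_card (Finset.ssubset_iff_subset_ne.mpr
              ⟨Finset.inter_subset_left, hI⟩)
            omega
          have hdt : (S ∩ T).card ≤ T.card := Finset.card_le_card Finset.inter_subset_right
          exact fE_caseR n (n / 2) ε hk1 hk2 hε hε' T.card (S ∪ T).card (S ∩ T).card
            hc hd hdt (by omega)
  · by_cases hTR : T = R
    · subst hTR
      rw [if_neg hSR, if_pos rfl]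
      by_cases hU : S ∪ T = T
      · have hSsub : S ⊆ T := Finset.union_eq_right.mp hU
        have hI : S ∩ T = S := Finset.inter_eq_left.mpr hSsub
        rw [hU, hI, if_pos rfl, if_neg hSR]
        linarith
      · by_cases hI : S ∩ T = T
        · have hRsub : T ⊆ S := Finset.inter_eq_right.mp hI
          have hU' : S ∪ T = S := Finset.union_eq_left.mpr hRsub
          rw [hU', hI, if_pos rfl, if_neg hSR]
        · rw [if_neg hU, if_neg hI, hgf, hgf, hgf]
          have hc : n / 2 < (S ∪ T).card := by
            have := Finset.card_lt_card (Finset.ssubset_iff_subset_ne.mpr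
              ⟨Finset.subset_union_right, fun h => hU h.symm⟩)
            omega
          have hd : (S ∩ T).card < n / 2 := by
            have := Finset.card_lt_card (Finset.ssubset_iff_subset_ne.mpr
              ⟨Finset.inter_subset_right, hI⟩)
            omega
          have hdt : (S ∩ T).card ≤ S.card := Finset.card_le_card Finset.inter_subset_left
          have := fE_caseR n (n / 2) ε hk1 hk2 hε hε' S.card (S ∪ T).card (S ∩ T).card
            hc hd hdt (by omega)
          linarith
    · rw [if_neg hSR, if_neg hTR]
      by_cases hU : S ∪ T = R
      · have hI : S ∩ T ≠ R := by
          intro h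
          apply hSR
          have h1 : R ⊆ S := h ▸ Finset.inter_subset_left
          have h2 : S ⊆ R := hU ▸ Finset.subset_union_left
          exact Finset.Subset.antisymm h2 h1
        rw [if_pos hU, if_neg hI, hgf, hgf, hgf]
        have hUc : (S ∪ T).card = n / 2 := by rw [hU, hRcard]
        have hs : S.card ≤ n / 2 := by
          have := Finset.card_le_card (Finset.subset_union_left : S ⊆ S ∪ T); omega
        have ht : T.card ≤ n / 2 := by
          have := Finset.card_le_card (Finset.subset_union_right : T ⊆ S ∪ T); omega
        have hd : (S ∩ T).card ≤ n / 2 := by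
          have := Finset.card_le_card (Finset.inter_subset_left : S ∩ T ⊆ S); omega
        exact fE_caseU n (n / 2) ε hk1 hk2 hε hε' S.card T.card (S ∩ T).card
          hs ht hd (by omega)
      · by_cases hI : S ∩ T = R
        · rw [if_neg hU, if_pos hI, hgf, hgf, hgf]
          have hs : n / 2 < S.card := by
            have := Finset.card_lt_card (Finset.ssubset_iff_subset_ne.mpr
              ⟨hI ▸ Finset.inter_subset_left, fun h => hSR h.symm⟩)
            omega
          have ht : n / 2 < T.card := by
            have := Finset.card_lt_card (Finset.ssubset_iff_subset_ne.mpr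
              ⟨hI ▸ Finset.inter_subset_right, fun h => hTR h.symm⟩)
            omega
          have hc : n / 2 < (S ∪ T).card := by
            have := Finset.card_le_card (Finset.subset_union_left : S ⊆ S ∪ T); omega
          have hIc : (S ∩ T).card = n / 2 := by rw [hI, hRcard]
          exact fE_caseI n (n / 2) ε S.card T.card (S ∪ T).card hs ht hc (by omega)
        · rw [if_neg hU, if_neg hI, hgf, hgf, hgf, hgf]
          exact fE_conv n (n / 2) ε hk1 hk2 hε hε' S.card T.card (S ∪ T).card (S ∩ T).card
            (Finset.card_le_card Finset.subset_union_left)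
            (Finset.card_le_card Finset.subset_union_right)
            (Finset.card_le_card Finset.inter_subset_left)
            (Finset.card_le_card Finset.inter_subset_right)
            hcard
end
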